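/- Consider the iterated local max algorithm on a finite simple graph G with m edges, where in each round the surviving edges are ranked by an independent, uniformly random linear order (fresh random tie-breaking each round). Then for every k ≥ 0, the expected number of surviving edges satisfies E[|E(G_k)|] ≤ m · 2^{-k}. -/

import Mathlib

open Classical

/-- Two edges of a graph share an endpoint. -/
def shareEndpoint {V : Type*} (e f : Sym2 V) : Prop := ∃ v, v ∈ e ∧ v ∈ f

variable {V : Type*} [Fintype V] [DecidableEq V]

/-- A ranking of the edges of `G`: a bijection `E(G) ≃ {1, …, m}`. A uniformly
random such ranking induces a uniformly random linear order on any subset of the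
edges, in particular on the surviving edges of any round. -/
abbrev EdgeRanking (G : SimpleGraph V) [DecidableRel G.Adj] : Type _ :=
  {e : Sym2 V // e ∈ G.edgeFinset} ≃ Fin G.edgeFinset.card

/-- The rank of an edge under a ranking (arbitrary value on non-edges). -/
noncomputable def rk (G : SimpleGraph V) [DecidableRel G.Adj] (σ : EdgeRanking G)
    (e : Sym2 V) : ℕ :=
  if h : e ∈ G.edgeFinset then (σ ⟨e, h⟩ : ℕ) else 0

/-- An edge `e` of the surviving subgraph with edge set `E` is locally maximal under
the ranking `σ`: `e ∈ E` and the rank of `e` is larger than the rank of any other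
edge of `E` sharing an endpoint with `e`. -/
def locMaxInR (G : SimpleGraph V) [DecidableRel G.Adj] (σ : EdgeRanking G)
    (E : Finset (Sym2 V)) (e : Sym2 V) : Prop :=
  e ∈ E ∧ ∀ f ∈ E, f ≠ e → shareEndpoint e f → rk G σ f < rk G σ e

/-- One round of the local max algorithm under the ranking `σ`: remove every edge
sharing an endpoint with some locally maximal edge (including the locally maximal
edges themselves). -/
noncomputable def stepR (G : SimpleGraph V) [DecidableRel G.Adj] (σ : EdgeRanking G)
    (E : Finset (Sym2 V)) : Finset (Sym2 V) :=
  E.filter fun f => ¬ ∃ e, locMaxInR G σ E e ∧ shareEndpoint e f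

/-- The edge set of the graph `G_k` after `k` rounds of the iterated local max
algorithm, where round `i` uses the fresh random ranking `σs i`. -/
noncomputable def EseqR (G : SimpleGraph V) [DecidableRel G.Adj]
    (σs : ℕ → EdgeRanking G) : ℕ → Finset (Sym2 V)
  | 0 => G.edgeFinset
  | n + 1 => stepR G (σs n) (EseqR G σs n)

/-- Extend a finite tuple of rankings to an infinite sequence (rounds `≥ k` get a
fixed dummy ranking; they are irrelevant for the first `k` rounds). -/
noncomputable def pad (G : SimpleGraph V) [DecidableRel G.Adj] {k : ℕ}
    (σs : Fin k → EdgeRanking G) : ℕ → EdgeRanking G := fun i =>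
  if h : i < k then σs ⟨i, h⟩ else Fintype.equivFinOfCardEq (Fintype.card_coe _)

section Aux

variable (G : SimpleGraph V) [DecidableRel G.Adj]

lemma shareEndpoint_self (e : Sym2 V) : shareEndpoint e e := by
  induction e using Sym2.ind with
  | _ a b => exact ⟨a, Sym2.mem_mk_left a b, Sym2.mem_mk_left a b⟩

lemma rk_inj (σ : EdgeRanking G) {f g : Sym2 V} (hf : f ∈ G.edgeFinset)
    (hg : g ∈ G.edgeFinset) (h : rk G σ f = rk G σ g) : f = g := by
  simp only [rk, dif_pos hf, dif_pos hg] at h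
  have h2 := σ.injective (Fin.val_injective h)
  exact congrArg Subtype.val h2

/-- Closed neighbourhood of an edge inside an edge set. -/
noncomputable def Nbr (E : Finset (Sym2 V)) (e : Sym2 V) : Finset (Sym2 V) :=
  E.filter (fun f => shareEndpoint e f)

lemma lm_unique (σ : EdgeRanking G) (E : Finset (Sym2 V)) {e₁ e₂ : Sym2 V} {v : V}
    (h1 : locMaxInR G σ E e₁) (h2 : locMaxInR G σ E e₂) (hv1 : v ∈ e₁) (hv2 : v ∈ e₂) :
    e₁ = e₂ := by
  by_contra hne
  have ha := h1.2 e₂ h2.1 (fun h => hne h.symm) ⟨v, hv1, hv2⟩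
  have hb := h2.2 e₁ h1.1 hne ⟨v, hv2, hv1⟩
  exact lt_asymm ha hb

lemma count_locmax (E : Finset (Sym2 V)) (hE : E ⊆ G.edgeFinset) {e : Sym2 V} (he : e ∈ E) :
    (Nbr E e).card *
      (Finset.univ.filter (fun σ : EdgeRanking G => locMaxInR G σ E e)).card =
      Fintype.card (EdgeRanking G) := by
  classical
  set S : Sym2 V → Finset (EdgeRanking G) :=
    fun g => Finset.univ.filter
      (fun σ => ∀ f ∈ Nbr E e, f ≠ g → rk G σ f < rk G σ g) with hS
  have heN : e ∈ Nbr E e := Finset.mem_filter.2 ⟨he, shareEndpoint_self e⟩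
  have hsubE : ∀ {f : Sym2 V}, f ∈ Nbr E e → f ∈ G.edgeFinset :=
    fun hf => hE (Finset.mem_filter.1 hf).1
  have hcover : (Nbr E e).biUnion S = Finset.univ := by
    apply Finset.eq_univ_of_forall
    intro σ
    obtain ⟨b, hb, hmax⟩ := Finset.exists_max_image (Nbr E e) (rk G σ) ⟨e, heN⟩
    refine Finset.mem_biUnion.2 ⟨b, hb, Finset.mem_filter.2 ⟨Finset.mem_univ _, ?_⟩⟩
    intro f hf hfb
    exact lt_of_le_of_ne (hmax f hf) (fun h => hfb (rk_inj G σ (hsubE hf) (hsubE hb) h))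
  have hdisj : ∀ g₁ ∈ Nbr E e, ∀ g₂ ∈ Nbr E e, g₁ ≠ g₂ → Disjoint (S g₁) (S g₂) := by
    intro g₁ h₁ g₂ h₂ hne
    rw [Finset.disjoint_left]
    intro σ hσ1 hσ2
    have a1 := (Finset.mem_filter.1 hσ1).2 g₂ h₂ (Ne.symm hne)
    have a2 := (Finset.mem_filter.1 hσ2).2 g₁ h₁ hne
    exact lt_asymm a1 a2
  have hcards : ∀ g ∈ Nbr E e, (S g).card = (S e).card := by
    intro g hg
    have hgE : g ∈ G.edgeFinset := hsubE hg
    have heE : e ∈ G.edgeFinset := hsubE heN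
    set τ : EdgeRanking G → EdgeRanking G :=
      fun σ => (Equiv.swap (⟨e, heE⟩ : {x // x ∈ G.edgeFinset}) ⟨g, hgE⟩).trans σ with hτ
    have hrk_e : ∀ σ, rk G (τ σ) e = rk G σ g := by
      intro σ
      simp only [rk, dif_pos heE, dif_pos hgE, hτ, Equiv.trans_apply, Equiv.swap_apply_left]
    have hrk_g : ∀ σ, rk G (τ σ) g = rk G σ e := by
      intro σ
      simp only [rk, dif_pos heE, dif_pos hgE, hτ, Equiv.trans_apply, Equiv.swap_apply_right]
    have hrk_other : ∀ σ {f : Sym2 V} (hf : f ∈ G.edgeFinset), f ≠ e → f ≠ g →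
        rk G (τ σ) f = rk G σ f := by
      intro σ f hf hfe hfg
      simp only [rk, dif_pos hf, hτ, Equiv.trans_apply]
      rw [Equiv.swap_apply_of_ne_of_ne (by simp [Subtype.ext_iff, hfe])
        (by simp [Subtype.ext_iff, hfg])]
    have hτinv : ∀ σ, τ (τ σ) = σ := by
      intro σ
      apply Equiv.ext
      intro x
      simp [hτ, Equiv.trans_apply, Equiv.swap_apply_self]
    have claim1 : ∀ σ ∈ S g, τ σ ∈ S e := by
      intro σ hσ
      have hσ' := (Finset.mem_filter.1 hσ).2
      refine Finset.mem_filter.2 ⟨Finset.mem_univ _, ?_⟩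
      intro f hf hfe
      by_cases hfg : f = g
      · subst hfg
        rw [hrk_g, hrk_e]
        exact hσ' e heN (Ne.symm hfe)
      · rw [hrk_other σ (hsubE hf) hfe hfg, hrk_e]
        exact hσ' f hf hfg
    have claim2 : ∀ σ ∈ S e, τ σ ∈ S g := by
      intro σ hσ
      have hσ' := (Finset.mem_filter.1 hσ).2
      refine Finset.mem_filter.2 ⟨Finset.mem_univ _, ?_⟩
      intro f hf hfg
      by_cases hfe : f = e
      · subst hfe
        rw [hrk_e, hrk_g]
        exact hσ' g hg (Ne.symm hfg)
      · rw [hrk_other σ (hsubE hf) hfe hfg, hrk_g]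
        exact hσ' f hf hfe
    exact Finset.card_bij' (fun σ _ => τ σ) (fun σ _ => τ σ) claim1 claim2
      (fun σ _ => hτinv σ) (fun σ _ => hτinv σ)
  have hSe : (Finset.univ.filter (fun σ : EdgeRanking G => locMaxInR G σ E e)) = S e := by
    ext σ
    simp only [hS, Finset.mem_filter, Finset.mem_univ, true_and]
    constructor
    · rintro ⟨-, h⟩ f hf hfe
      exact h f (Finset.mem_filter.1 hf).1 hfe (Finset.mem_filter.1 hf).2
    · intro h
      exact ⟨he, fun f hf hfe hsh => h f (Finset.mem_filter.2 ⟨hf, hsh⟩) hfe⟩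
  have h1 : Fintype.card (EdgeRanking G) = ((Nbr E e).biUnion S).card := by
    rw [hcover, Finset.card_univ]
  have h2 : ∑ g ∈ Nbr E e, (S g).card = (Nbr E e).card * (S e).card := by
    rw [Finset.sum_congr rfl hcards, Finset.sum_const, smul_eq_mul]
  rw [hSe, h1, Finset.card_biUnion hdisj, h2]

end Aux

section Aux2

variable (G : SimpleGraph V) [DecidableRel G.Adj]

lemma pointwise_bound (σ : EdgeRanking G) (E : Finset (Sym2 V)) :
    ∑ e ∈ E.filter (fun e => locMaxInR G σ E e), (Nbr E e).card ≤
      2 * (E.filter (fun f => ∃ e, locMaxInR G σ E e ∧ shareEndpoint e f)).card := by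
  classical
  set LM := E.filter (fun e => locMaxInR G σ E e) with hLM
  have hswap : ∑ e ∈ LM, (Nbr E e).card =
      ∑ f ∈ E, (LM.filter (fun e => shareEndpoint e f)).card := by
    simp only [Nbr, Finset.card_filter]
    rw [Finset.sum_comm]
  have hLMmem : ∀ {a : Sym2 V}, a ∈ LM → locMaxInR G σ E a :=
    fun ha => (Finset.mem_filter.1 ha).2
  have hle2 : ∀ f : Sym2 V, (LM.filter (fun e => shareEndpoint e f)).card ≤ 2 := by
    intro f
    induction f using Sym2.ind with
    | _ x y =>
      have hone : ∀ v : V, (LM.filter (fun e => v ∈ e)).card ≤ 1 := by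
        intro v
        apply Finset.card_le_one.2
        intro a ha b hb
        exact lm_unique G σ E (hLMmem (Finset.mem_filter.1 ha).1)
          (hLMmem (Finset.mem_filter.1 hb).1)
          (Finset.mem_filter.1 ha).2 (Finset.mem_filter.1 hb).2
      have hsub : LM.filter (fun e => shareEndpoint e s(x, y)) ⊆
          (LM.filter (fun e => x ∈ e)) ∪ (LM.filter (fun e => y ∈ e)) := by
        intro a ha
        obtain ⟨haLM, v, hv1, hv2⟩ := Finset.mem_filter.1 ha
        rcases Sym2.mem_iff.1 hv2 with rfl | rfl
        · exact Finset.mem_union_left _ (Finset.mem_filter.2 ⟨haLM, hv1⟩)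
        · exact Finset.mem_union_right _ (Finset.mem_filter.2 ⟨haLM, hv1⟩)
      calc (LM.filter (fun e => shareEndpoint e s(x, y))).card
          ≤ ((LM.filter (fun e => x ∈ e)) ∪ (LM.filter (fun e => y ∈ e))).card :=
            Finset.card_le_card hsub
        _ ≤ (LM.filter (fun e => x ∈ e)).card + (LM.filter (fun e => y ∈ e)).card :=
            Finset.card_union_le _ _
        _ ≤ 2 := by have := hone x; have := hone y; omega
  have hzero : ∀ f ∈ E, (¬ ∃ e, locMaxInR G σ E e ∧ shareEndpoint e f) →
      (LM.filter (fun e => shareEndpoint e f)).card = 0 := by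
    intro f _ hnot
    rw [Finset.card_eq_zero, Finset.filter_eq_empty_iff]
    intro a ha hsh
    exact hnot ⟨a, hLMmem ha, hsh⟩
  rw [hswap, ← Finset.sum_filter_add_sum_filter_not E
    (fun f => ∃ e, locMaxInR G σ E e ∧ shareEndpoint e f)]
  have hz : ∑ f ∈ E.filter (fun f => ¬ ∃ e, locMaxInR G σ E e ∧ shareEndpoint e f),
      (LM.filter (fun e => shareEndpoint e f)).card = 0 := by
    apply Finset.sum_eq_zero
    intro f hf
    exact hzero f (Finset.mem_filter.1 hf).1 (Finset.mem_filter.1 hf).2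
  rw [hz, add_zero]
  calc ∑ f ∈ E.filter (fun f => ∃ e, locMaxInR G σ E e ∧ shareEndpoint e f),
        (LM.filter (fun e => shareEndpoint e f)).card
      ≤ ∑ _f ∈ E.filter (fun f => ∃ e, locMaxInR G σ E e ∧ shareEndpoint e f), 2 :=
        Finset.sum_le_sum (fun f _ => hle2 f)
    _ = 2 * (E.filter (fun f => ∃ e, locMaxInR G σ E e ∧ shareEndpoint e f)).card := by
        rw [Finset.sum_const, smul_eq_mul, mul_comm]

lemma one_round (E : Finset (Sym2 V)) (hE : E ⊆ G.edgeFinset) :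
    2 * ∑ σ : EdgeRanking G, (stepR G σ E).card ≤
      Fintype.card (EdgeRanking G) * E.card := by
  classical
  set p : EdgeRanking G → Sym2 V → Prop :=
    fun σ f => ∃ e, locMaxInR G σ E e ∧ shareEndpoint e f with hp
  have hsplit : ∀ σ : EdgeRanking G,
      (stepR G σ E).card + (E.filter (p σ)).card = E.card := by
    intro σ
    have h := Finset.card_filter_add_card_filter_not (s := E) (p := p σ)
    have hst : (stepR G σ E).card = (E.filter (fun f => ¬ p σ f)).card := by
      congr 1
    omega
  have hkill : Fintype.card (EdgeRanking G) * E.card ≤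
      2 * ∑ σ : EdgeRanking G, (E.filter (p σ)).card := by
    have h2 : (∑ σ : EdgeRanking G,
        ∑ e ∈ E.filter (fun e => locMaxInR G σ E e), (Nbr E e).card) =
        E.card * Fintype.card (EdgeRanking G) := by
      have hsf : ∀ σ : EdgeRanking G,
          ∑ e ∈ E.filter (fun e => locMaxInR G σ E e), (Nbr E e).card =
          ∑ e ∈ E, if locMaxInR G σ E e then (Nbr E e).card else 0 :=
        fun σ => Finset.sum_filter _ _
      rw [Finset.sum_congr rfl (fun σ _ => hsf σ), Finset.sum_comm]
      have h3 : ∀ e ∈ E,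
          (∑ σ : EdgeRanking G, if locMaxInR G σ E e then (Nbr E e).card else 0) =
          Fintype.card (EdgeRanking G) := by
        intro e he
        rw [← Finset.sum_filter, Finset.sum_const, smul_eq_mul, mul_comm]
        exact count_locmax G E hE he
      rw [Finset.sum_congr rfl h3, Finset.sum_const, smul_eq_mul]
    calc Fintype.card (EdgeRanking G) * E.card
        = ∑ σ : EdgeRanking G,
            ∑ e ∈ E.filter (fun e => locMaxInR G σ E e), (Nbr E e).card := by
          rw [h2, mul_comm]
      _ ≤ ∑ σ : EdgeRanking G, 2 * (E.filter (p σ)).card :=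
          Finset.sum_le_sum (fun σ _ => pointwise_bound G σ E)
      _ = 2 * ∑ σ : EdgeRanking G, (E.filter (p σ)).card := by rw [Finset.mul_sum]
  have hsum : (∑ σ : EdgeRanking G, (stepR G σ E).card) +
      (∑ σ : EdgeRanking G, (E.filter (p σ)).card) =
      Fintype.card (EdgeRanking G) * E.card := by
    rw [← Finset.sum_add_distrib, Finset.sum_congr rfl (fun σ _ => hsplit σ),
      Finset.sum_const, Finset.card_univ, smul_eq_mul]
  omega

end Aux2

section Aux3

variable (G : SimpleGraph V) [DecidableRel G.Adj]

lemma EseqR_subset (σs : ℕ → EdgeRanking G) (n : ℕ) : EseqR G σs n ⊆ G.edgeFinset := by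
  induction n with
  | zero => exact Finset.Subset.refl _
  | succ n ih =>
    simp only [EseqR, stepR]
    exact (Finset.filter_subset _ _).trans ih

lemma EseqR_congr (σs τs : ℕ → EdgeRanking G) (n : ℕ) (h : ∀ i < n, σs i = τs i) :
    EseqR G σs n = EseqR G τs n := by
  induction n with
  | zero => rfl
  | succ n ih =>
    simp only [EseqR]
    rw [ih (fun i hi => h i (Nat.lt_succ_of_lt hi)), h n (Nat.lt_succ_self n)]

lemma pad_snoc (k : ℕ) (σs : Fin k → EdgeRanking G) (σ : EdgeRanking G) :
    EseqR G (pad G (Fin.snoc σs σ : Fin (k + 1) → EdgeRanking G)) (k + 1) =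
      stepR G σ (EseqR G (pad G σs) k) := by
  have h1 : ∀ i < k, pad G (Fin.snoc σs σ : Fin (k + 1) → EdgeRanking G) i = pad G σs i := by
    intro i hi
    simp only [pad]
    rw [dif_pos (Nat.lt_succ_of_lt hi), dif_pos hi]
    have hc : (⟨i, Nat.lt_succ_of_lt hi⟩ : Fin (k + 1)) = Fin.castSucc ⟨i, hi⟩ := rfl
    rw [hc, Fin.snoc_castSucc]
  have h2 : pad G (Fin.snoc σs σ : Fin (k + 1) → EdgeRanking G) k = σ := by
    simp only [pad]
    rw [dif_pos (Nat.lt_succ_self k)]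
    have hc : (⟨k, Nat.lt_succ_self k⟩ : Fin (k + 1)) = Fin.last k := rfl
    rw [hc, Fin.snoc_last]
  simp only [EseqR]
  rw [h2, EseqR_congr G _ _ k h1]

lemma main_nat (k : ℕ) :
    2 ^ k * ∑ σs : Fin k → EdgeRanking G, (EseqR G (pad G σs) k).card ≤
      Fintype.card (EdgeRanking G) ^ k * G.edgeFinset.card := by
  induction k with
  | zero => simp [EseqR]
  | succ k ih =>
    have hre : (∑ σs : Fin (k + 1) → EdgeRanking G, (EseqR G (pad G σs) (k + 1)).card) =
        ∑ p : (Fin k → EdgeRanking G) × EdgeRanking G,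
          (stepR G p.2 (EseqR G (pad G p.1) k)).card := by
      refine (Fintype.sum_bijective
        (fun p : (Fin k → EdgeRanking G) × EdgeRanking G =>
          (Fin.snoc p.1 p.2 : Fin (k + 1) → EdgeRanking G)) ?_ _ _ (fun p => ?_)).symm
      · exact Function.bijective_iff_has_inverse.2
          ⟨fun f => (Fin.init f, f (Fin.last k)),
            fun p => by simp [Fin.init_snoc, Fin.snoc_last],
            fun f => Fin.snoc_init_self f⟩
      · rw [pad_snoc]
    rw [hre, Fintype.sum_prod_type]
    have hone : ∀ σs' : Fin k → EdgeRanking G,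
        2 * ∑ σ : EdgeRanking G, (stepR G σ (EseqR G (pad G σs') k)).card ≤
          Fintype.card (EdgeRanking G) * (EseqR G (pad G σs') k).card :=
      fun σs' => one_round G _ (EseqR_subset G _ k)
    calc 2 ^ (k + 1) * ∑ σs' : Fin k → EdgeRanking G,
          ∑ σ : EdgeRanking G, (stepR G σ (EseqR G (pad G σs') k)).card
        = 2 ^ k * ∑ σs' : Fin k → EdgeRanking G,
            2 * ∑ σ : EdgeRanking G, (stepR G σ (EseqR G (pad G σs') k)).card := by
          rw [← Finset.mul_sum]; ring
      _ ≤ 2 ^ k * ∑ σs' : Fin k → EdgeRanking G,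
            Fintype.card (EdgeRanking G) * (EseqR G (pad G σs') k).card :=
          Nat.mul_le_mul_left _ (Finset.sum_le_sum fun σs' _ => hone σs')
      _ = Fintype.card (EdgeRanking G) *
            (2 ^ k * ∑ σs' : Fin k → EdgeRanking G, (EseqR G (pad G σs') k).card) := by
          rw [← Finset.mul_sum]; ring
      _ ≤ Fintype.card (EdgeRanking G) *
            (Fintype.card (EdgeRanking G) ^ k * G.edgeFinset.card) :=
          Nat.mul_le_mul_left _ ih
      _ = Fintype.card (EdgeRanking G) ^ (k + 1) * G.edgeFinset.card := by ring

end Aux3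

/-- Consider the iterated local max algorithm on a finite simple
graph `G` with `m` edges, where in each round the surviving edges are ranked by an
independent, uniformly random linear order. Then for every `k ≥ 0`, the expected
number of surviving edges satisfies `E[|E(G_k)|] ≤ m · 2^{-k}`. -/
theorem stmt15 (G : SimpleGraph V) [DecidableRel G.Adj] (k : ℕ) :
    (∑ σs : Fin k → EdgeRanking G, ((EseqR G (pad G σs) k).card : ℝ)) /
        (Fintype.card (Fin k → EdgeRanking G) : ℝ) ≤
      (G.edgeFinset.card : ℝ) * (2 : ℝ)⁻¹ ^ k := by
  have hne : Nonempty (EdgeRanking G) := ⟨Fintype.equivFinOfCardEq (Fintype.card_coe _)⟩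
  have hpos : 0 < Fintype.card (EdgeRanking G) := Fintype.card_pos
  have hN : (Fintype.card (Fin k → EdgeRanking G)) = Fintype.card (EdgeRanking G) ^ k := by
    rw [Fintype.card_fun, Fintype.card_fin]
  have hnat := main_nat G k
  have hcast : (∑ σs : Fin k → EdgeRanking G, ((EseqR G (pad G σs) k).card : ℝ)) =
      ((∑ σs : Fin k → EdgeRanking G, (EseqR G (pad G σs) k).card : ℕ) : ℝ) := by
    push_cast; rfl
  rw [hN, hcast, Nat.cast_pow, div_le_iff₀ (by positivity)]
  have key : (2 : ℝ) ^ k * ((∑ σs : Fin k → EdgeRanking G,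
      (EseqR G (pad G σs) k).card : ℕ) : ℝ) ≤
      ((Fintype.card (EdgeRanking G) : ℝ)) ^ k * (G.edgeFinset.card : ℝ) := by
    exact_mod_cast hnat
  have h2k : (0 : ℝ) < 2 ^ k := by positivity
  calc ((∑ σs : Fin k → EdgeRanking G, (EseqR G (pad G σs) k).card : ℕ) : ℝ)
      = ((2 : ℝ) ^ k * ((∑ σs : Fin k → EdgeRanking G,
          (EseqR G (pad G σs) k).card : ℕ) : ℝ)) / 2 ^ k := by field_simp
    _ ≤ (((Fintype.card (EdgeRanking G) : ℝ)) ^ k * (G.edgeFinset.card : ℝ)) / 2 ^ k := by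
        gcongr
    _ = (G.edgeFinset.card : ℝ) * (2 : ℝ)⁻¹ ^ k * ((Fintype.card (EdgeRanking G) : ℝ) ^ k) := by
        rw [inv_pow]; field_simp
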